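/- Let n be an integer and let g_k(n) be the polynomials defined by the recursion g_0(n) = 1 and g_{k+1}(n)(u) = −((n − k)·u·g_k(n)(u) + (u² − 1)·d/du[g_k(n)(u)]). Then for every natural number k and every complex number x with cos x ≠ 0, the k-th derivative of the function z ↦ (cos z)^n (integer power), evaluated at x, equals (cos x)^(n−k) · g_k(n)(sin x). -/

import Mathlib

open Polynomial

/-- The polynomials `g_k(n)` with `g_0(n) = 1` and
`g_{k+1}(n)(u) = -((n - k)·u·g_k(n)(u) + (u² - 1)·d/du[g_k(n)(u)])`. -/
noncomputable def gPoly (n : ℤ) : ℕ → Polynomial ℂ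
  | 0 => 1
  | k + 1 =>
      -(Polynomial.C ((n : ℂ) - (k : ℂ)) * Polynomial.X * gPoly n k +
        (Polynomial.X ^ 2 - 1) * Polynomial.derivative (gPoly n k))

theorem iteratedDeriv_cos_zpow_eq_gPoly (n : ℤ) (k : ℕ) (x : ℂ)
    (hx : Complex.cos x ≠ 0) :
    iteratedDeriv k (fun z : ℂ => Complex.cos z ^ n) x =
      Complex.cos x ^ (n - (k : ℤ)) * (gPoly n k).eval (Complex.sin x) := by
  induction k generalizing x with
  | zero => simp [gPoly]
  | succ k ih =>
    have hopen : IsOpen {z : ℂ | Complex.cos z ≠ 0} :=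
      isOpen_compl_singleton.preimage Complex.continuous_cos
    have hmem : {z : ℂ | Complex.cos z ≠ 0} ∈ nhds x := hopen.mem_nhds hx
    have heq : iteratedDeriv k (fun z : ℂ => Complex.cos z ^ n) =ᶠ[nhds x]
        fun z => Complex.cos z ^ (n - (k : ℤ)) * (gPoly n k).eval (Complex.sin z) :=
      Filter.eventuallyEq_of_mem hmem fun z hz => ih z hz
    rw [iteratedDeriv_succ, heq.deriv_eq]
    have h1 : HasDerivAt (fun z : ℂ => Complex.cos z ^ (n - (k : ℤ)))
        (((n - (k : ℤ) : ℤ) : ℂ) * Complex.cos x ^ (n - (k : ℤ) - 1) * (-Complex.sin x)) x :=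
      (hasDerivAt_zpow (n - (k : ℤ)) (Complex.cos x) (Or.inl hx)).comp x (Complex.hasDerivAt_cos x)
    have h2 : HasDerivAt (fun z : ℂ => (gPoly n k).eval (Complex.sin z))
        ((Polynomial.derivative (gPoly n k)).eval (Complex.sin x) * Complex.cos x) x :=
      (Polynomial.hasDerivAt (gPoly n k) (Complex.sin x)).comp x (Complex.hasDerivAt_sin x)
    rw [(h1.fun_mul h2).deriv]
    have hs : Complex.sin x ^ 2 - 1 = -(Complex.cos x ^ 2) := by
      have := Complex.sin_sq_add_cos_sq x; linear_combination this
    have hc : Complex.cos x ^ (n - (k : ℤ)) =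
        Complex.cos x ^ (n - (k : ℤ) - 1) * Complex.cos x := by
      rw [zpow_sub_one₀ hx]
      field_simp
    have hk : n - ((k : ℕ) + 1 : ℤ) = n - (k : ℤ) - 1 := by ring
    simp only [gPoly, eval_neg, eval_add, eval_mul, eval_C, eval_X, eval_sub, eval_pow,
      eval_one]
    push_cast [hk]
    rw [hc, hs]
    ring
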